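/- Let N_k = 3^k + 1 and P_k = 2·3^k + 1. For every integer k ≥ 1, the triple intersection is trivial: C(1, N_k, P_k) = {x ∈ ℤ₃ : x ∈ Σ, N_k·x ∈ Σ, and P_k·x ∈ Σ} = {0}. In particular dim_H(C(1, N_k, P_k)) = 0. -/

import Mathlib

open MeasureTheory ENNReal

set_option maxHeartbeats 1000000

noncomputable section

/-- The 3-adic Cantor set: 3-adic integers whose 3-adic expansion uses only digits 0 and 1. -/
def Sigma3 : Set ℤ_[3] :=
  {x | ∃ a : ℕ → ℕ, (∀ i, a i ≤ 1) ∧ x = ∑' i, (a i : ℤ_[3]) * 3 ^ i}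

/-- `C1 M = C(1, M) = {x : x ∈ Σ and M·x ∈ Σ}`. -/
def C1 (M : ℕ) : Set ℤ_[3] :=
  {x | x ∈ Sigma3 ∧ (M : ℤ_[3]) * x ∈ Sigma3}

namespace AuxC1

lemma three_cast : ((3 : ℕ) : ℤ_[3]) = (3 : ℤ_[3]) := by norm_cast

lemma norm_three_pow (i : ℕ) : ‖(3 : ℤ_[3]) ^ i‖ = ((3 : ℝ)⁻¹) ^ i := by
  induction i with
  | zero => simp
  | succ n ih =>
    rw [pow_succ, norm_mul, ih, ← three_cast, PadicInt.norm_p, pow_succ]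
    norm_num

lemma summable_f3 (a : ℕ → ℕ) : Summable (fun i => (a i : ℤ_[3]) * 3 ^ i) := by
  apply Summable.of_norm_bounded (g := fun i => ((3 : ℝ)⁻¹) ^ i)
    (summable_geometric_of_lt_one (by norm_num) (by norm_num))
  intro i
  calc ‖(a i : ℤ_[3]) * 3 ^ i‖ = ‖(a i : ℤ_[3])‖ * ‖(3 : ℤ_[3]) ^ i‖ := norm_mul _ _
    _ ≤ 1 * ((3 : ℝ)⁻¹) ^ i := by
        rw [norm_three_pow]
        exact mul_le_mul_of_nonneg_right (PadicInt.norm_le_one _) (by positivity)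
    _ = ((3 : ℝ)⁻¹) ^ i := one_mul _

/-- Truncation: split a digit series into a partial sum and a tail divisible by `3 ^ n`. -/
lemma trunc (a : ℕ → ℕ) (n : ℕ) :
    ∑' i, (a i : ℤ_[3]) * 3 ^ i =
      (∑ i ∈ Finset.range n, (a i : ℤ_[3]) * 3 ^ i) +
        3 ^ n * ∑' i, (a (i + n) : ℤ_[3]) * 3 ^ i := by
  rw [← (summable_f3 a).sum_add_tsum_nat_add n]
  congr 1
  calc ∑' i, ((a (i + n) : ℤ_[3]) * 3 ^ (i + n))
      = ∑' i, (3 : ℤ_[3]) ^ n * ((a (i + n) : ℤ_[3]) * 3 ^ i) := by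
        apply tsum_congr; intro i; rw [pow_add]; ring
    _ = 3 ^ n * ∑' i, (a (i + n) : ℤ_[3]) * 3 ^ i :=
        ((summable_f3 (fun i => a (i + n))).hasSum.mul_left ((3:ℤ_[3]) ^ n)).tsum_eq

/-- Natural numbers smaller than `3 ^ n` that agree mod `3 ^ n` in `ℤ_[3]` are equal. -/
lemma nat_eq_of_cast_eq {m₁ m₂ n : ℕ} (h₁ : m₁ < 3 ^ n) (h₂ : m₂ < 3 ^ n)
    {u v : ℤ_[3]} (h : (m₁ : ℤ_[3]) + 3 ^ n * u = (m₂ : ℤ_[3]) + 3 ^ n * v) : m₁ = m₂ := by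
  have hdvd : (((3:ℕ) : ℤ) ^ n : ℤ) ∣ ((m₁ : ℤ) - (m₂ : ℤ)) := by
    rw [← PadicInt.norm_int_le_pow_iff_dvd]
    have he : (((m₁ : ℤ) - (m₂ : ℤ) : ℤ) : ℤ_[3]) = 3 ^ n * (v - u) := by
      push_cast
      linear_combination h
    rw [he, norm_mul, norm_three_pow]
    calc ((3:ℝ)⁻¹) ^ n * ‖v - u‖ ≤ ((3:ℝ)⁻¹) ^ n * 1 :=
          mul_le_mul_of_nonneg_left (PadicInt.norm_le_one _) (by positivity)
      _ = ((3:ℕ) : ℝ) ^ (-(n:ℤ)) := by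
          rw [mul_one, zpow_neg, zpow_natCast, ← inv_pow]
          norm_num
  have hdvd' : (((3 ^ n : ℕ) : ℤ)) ∣ ((m₁ : ℤ) - (m₂ : ℤ)) := by
    have : (((3 ^ n : ℕ) : ℤ)) = ((3:ℕ) : ℤ) ^ n := by push_cast; ring
    rw [this]; exact hdvd
  have hb : |(m₁ : ℤ) - (m₂ : ℤ)| < ((3 ^ n : ℕ) : ℤ) := by
    rw [abs_sub_lt_iff]
    omega
  have := Int.eq_zero_of_abs_lt_dvd hdvd' hb
  omega

/-- Partial digit sums are small: `2 * ∑_{i<n} a_i 3^i < 3^n` when all `a_i ≤ 1`. -/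
lemma partial_lt (a : ℕ → ℕ) (ha : ∀ i, a i ≤ 1) (n : ℕ) :
    2 * (∑ i ∈ Finset.range n, a i * 3 ^ i) < 3 ^ n := by
  induction n with
  | zero => simp
  | succ m ih =>
    rw [Finset.sum_range_succ]
    have := ha m
    have h3 : a m * 3 ^ m ≤ 3 ^ m := by
      calc a m * 3 ^ m ≤ 1 * 3 ^ m := Nat.mul_le_mul_right _ this
        _ = 3 ^ m := one_mul _
    calc 2 * ((∑ i ∈ Finset.range m, a i * 3 ^ i) + a m * 3 ^ m)
        = 2 * (∑ i ∈ Finset.range m, a i * 3 ^ i) + 2 * (a m * 3 ^ m) := by ring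
      _ < 3 ^ m + 2 * (a m * 3 ^ m) := by omega
      _ ≤ 3 ^ m + 2 * 3 ^ m := by omega
      _ = 3 ^ (m + 1) := by ring

/-- If `z ∈ Sigma3` and `z = 3 * w`, then `w ∈ Sigma3`. -/
lemma div3 {z w : ℤ_[3]} (hz : z ∈ Sigma3) (h : z = 3 * w) : w ∈ Sigma3 := by
  obtain ⟨a, ha, hrep⟩ := hz
  have ht := trunc a 1
  rw [← hrep] at ht
  simp only [Finset.sum_range_one, pow_zero, mul_one, pow_one] at ht
  -- z = a 0 + 3 * tail
  have ha0 : a 0 = 0 := by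
    by_contra h0
    have h1 : a 0 = 1 := by have := ha 0; omega
    rw [h1] at ht
    have : (1 : ℤ_[3]) = 3 * (w - ∑' i, (a (i + 1) : ℤ_[3]) * 3 ^ i) := by
      push_cast at ht
      linear_combination h - ht
    have hn : ‖(1 : ℤ_[3])‖ ≤ (3:ℝ)⁻¹ := by
      rw [this, norm_mul, ← three_cast, PadicInt.norm_p]
      calc (3:ℝ)⁻¹ * ‖w - ∑' i, (a (i + 1) : ℤ_[3]) * 3 ^ i‖ ≤ (3:ℝ)⁻¹ * 1 :=
            mul_le_mul_of_nonneg_left (PadicInt.norm_le_one _) (by norm_num)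
        _ = (3:ℝ)⁻¹ := mul_one _
    rw [norm_one] at hn
    norm_num at hn
  rw [ha0] at ht
  push_cast at ht
  rw [zero_add] at ht
  have hw : w = ∑' i, (a (i + 1) : ℤ_[3]) * 3 ^ i := by
    have h3 : (3 : ℤ_[3]) ≠ 0 := by
      intro hc
      have := congrArg norm hc
      rw [← three_cast, PadicInt.norm_p, norm_zero] at this
      norm_num at this
    apply mul_left_cancel₀ h3
    rw [← ht, ← h]
  exact ⟨fun i => a (i + 1), fun i => ha (i + 1), hw⟩

/-- Euclidean uniqueness at position `k`. -/
lemma digit_eq {k lo₁ lo₂ h₁ h₂ : ℕ} (hl₁ : lo₁ < 3 ^ k) (hl₂ : lo₂ < 3 ^ k)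
    (hh₁ : h₁ < 3) (hh₂ : h₂ < 3) (h : lo₁ + 3 ^ k * h₁ = lo₂ + 3 ^ k * h₂) :
    lo₁ = lo₂ ∧ h₁ = h₂ := by
  have hp : 0 < 3 ^ k := Nat.pow_pos (by norm_num)
  constructor
  · have e1 : (lo₁ + 3 ^ k * h₁) % 3 ^ k = lo₁ := by
      rw [Nat.add_mul_mod_self_left, Nat.mod_eq_of_lt hl₁]
    have e2 : (lo₂ + 3 ^ k * h₂) % 3 ^ k = lo₂ := by
      rw [Nat.add_mul_mod_self_left, Nat.mod_eq_of_lt hl₂]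
    rw [← e1, ← e2, h]
  · have e1 : (lo₁ + 3 ^ k * h₁) / 3 ^ k = h₁ := by
      rw [Nat.add_mul_div_left _ _ hp, Nat.div_eq_of_lt hl₁, zero_add]
    have e2 : (lo₂ + 3 ^ k * h₂) / 3 ^ k = h₂ := by
      rw [Nat.add_mul_div_left _ _ hp, Nat.div_eq_of_lt hl₂, zero_add]
    rw [← e1, ← e2, h]

end AuxC1

open AuxC1 in
/-- Core step: any element of the triple intersection is divisible by 3,
and the quotient is again in the triple intersection. -/
lemma triple_step (k : ℕ) (x : ℤ_[3])
    (hx : x ∈ Sigma3) (hN : ((3 ^ k + 1 : ℕ) : ℤ_[3]) * x ∈ Sigma3)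
    (hP : ((2 * 3 ^ k + 1 : ℕ) : ℤ_[3]) * x ∈ Sigma3) :
    ∃ y : ℤ_[3], x = 3 * y ∧ y ∈ Sigma3 ∧
      ((3 ^ k + 1 : ℕ) : ℤ_[3]) * y ∈ Sigma3 ∧
      ((2 * 3 ^ k + 1 : ℕ) : ℤ_[3]) * y ∈ Sigma3 := by
  obtain ⟨a, ha, hax⟩ := hx
  obtain ⟨b, hb, hbx⟩ := hN
  obtain ⟨c, hc, hcx⟩ := hP
  -- First: show 3 ∣ x, i.e. a 0 = 0
  have hp3 : (0:ℕ) < 3 ^ k := Nat.pow_pos (by norm_num)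
  have ha0 : a 0 = 0 := by
    by_contra h0
    have ha01 : a 0 = 1 := by have := ha 0; omega
    -- truncations
    have htx := trunc a (k + 1)
    have htx1 := trunc a 1
    have htb := trunc b (k + 1)
    have htc := trunc c (k + 1)
    rw [← hax] at htx htx1
    rw [← hbx] at htb
    rw [← hcx] at htc
    simp only [Finset.sum_range_one, pow_zero, mul_one, pow_one] at htx1
    set t : ℤ_[3] := ∑' i, (a (i + (k+1)) : ℤ_[3]) * 3 ^ i with hts
    set t₁ : ℤ_[3] := ∑' i, (a (i + 1) : ℤ_[3]) * 3 ^ i with ht1s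
    set s : ℤ_[3] := ∑' i, (b (i + (k+1)) : ℤ_[3]) * 3 ^ i with hss
    set r : ℤ_[3] := ∑' i, (c (i + (k+1)) : ℤ_[3]) * 3 ^ i with hrs
    -- natural-number partial sums
    set A : ℕ := ∑ i ∈ Finset.range (k+1), a i * 3 ^ i with hAs
    set B : ℕ := ∑ i ∈ Finset.range (k+1), b i * 3 ^ i with hBs
    set C : ℕ := ∑ i ∈ Finset.range (k+1), c i * 3 ^ i with hCs
    have hAcast : ((A : ℕ) : ℤ_[3]) = ∑ i ∈ Finset.range (k+1), (a i : ℤ_[3]) * 3 ^ i := by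
      rw [hAs]; push_cast; ring
    have hBcast : ((B : ℕ) : ℤ_[3]) = ∑ i ∈ Finset.range (k+1), (b i : ℤ_[3]) * 3 ^ i := by
      rw [hBs]; push_cast; ring
    have hCcast : ((C : ℕ) : ℤ_[3]) = ∑ i ∈ Finset.range (k+1), (c i : ℤ_[3]) * 3 ^ i := by
      rw [hCs]; push_cast; ring
    rw [← hAcast] at htx
    rw [← hBcast] at htb
    rw [← hCcast] at htc
    -- bounds
    have hA2 := partial_lt a ha (k+1)
    have hB2 := partial_lt b hb (k+1)
    have hC2 := partial_lt c hc (k+1)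
    rw [← hAs] at hA2
    rw [← hBs] at hB2
    rw [← hCs] at hC2
    have h3k1 : (3:ℕ) ^ (k+1) = 3 * 3 ^ k := by ring
    -- key congruence for N_k = 3^k + 1
    have heqB : (B : ℤ_[3]) + 3 ^ (k+1) * s = ((A + 3 ^ k * a 0 : ℕ) : ℤ_[3]) +
        3 ^ (k+1) * (t + t₁) := by
      rw [← htb]
      have hxx : ((3 ^ k + 1 : ℕ) : ℤ_[3]) * x = x + 3 ^ k * x := by push_cast; ring
      rw [hxx]
      push_cast
      calc x + 3 ^ k * x
          = ((A:ℤ_[3]) + 3 ^ (k+1) * t) + 3 ^ k * ((a 0 : ℤ_[3]) + 3 * t₁) := by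
            rw [← htx, ← htx1]
        _ = ((A:ℤ_[3]) + 3 ^ k * (a 0)) +
            3 ^ (k+1) * (t + t₁) := by
            ring
        _ = _ := by ring
    have hBA : B = A + 3 ^ k * a 0 := by
      apply nat_eq_of_cast_eq (n := k+1) _ _ heqB
      · omega
      · rw [ha01]; omega
    -- split A, B at position k
    have hAsplit : A = (∑ i ∈ Finset.range k, a i * 3 ^ i) + 3 ^ k * a k := by
      rw [hAs, Finset.sum_range_succ]; ring
    have hBsplit : B = (∑ i ∈ Finset.range k, b i * 3 ^ i) + 3 ^ k * b k := by
      rw [hBs, Finset.sum_range_succ]; ring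
    have hA'2 := partial_lt a ha k
    have hB'2 := partial_lt b hb k
    have hdig : (∑ i ∈ Finset.range k, b i * 3 ^ i) = (∑ i ∈ Finset.range k, a i * 3 ^ i)
        ∧ b k = a k + a 0 := by
      apply digit_eq (k := k) (by omega) (by omega) (by have := hb k; omega)
        (by have := ha k; have := ha 0; omega)
      rw [← hBsplit]
      rw [hBA, hAsplit]
      ring
    have hak : a k = 0 := by
      have := hb k
      have := hdig.2
      omega
    -- key congruence for P_k = 2*3^k + 1
    have heqC : (C : ℤ_[3]) + 3 ^ (k+1) * r = ((A + 2 * 3 ^ k * a 0 : ℕ) : ℤ_[3]) +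
        3 ^ (k+1) * (t + 2 * t₁) := by
      rw [← htc]
      have hxx : ((2 * 3 ^ k + 1 : ℕ) : ℤ_[3]) * x = x + 2 * 3 ^ k * x := by push_cast; ring
      rw [hxx]
      push_cast
      calc x + 2 * 3 ^ k * x
          = ((A:ℤ_[3]) + 3 ^ (k+1) * t) + 2 * 3 ^ k * ((a 0 : ℤ_[3]) + 3 * t₁) := by
            rw [← htx, ← htx1]
        _ = _ := by ring
    have hAk : A = ∑ i ∈ Finset.range k, a i * 3 ^ i := by
      rw [hAsplit, hak]; ring
    have hCA : C = A + 2 * 3 ^ k * a 0 := by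
      apply nat_eq_of_cast_eq (n := k+1) _ _ heqC
      · omega
      · rw [ha01, hAk]; omega
    have hCsplit : C = (∑ i ∈ Finset.range k, c i * 3 ^ i) + 3 ^ k * c k := by
      rw [hCs, Finset.sum_range_succ]; ring
    have hC'2 := partial_lt c hc k
    have hdigC : (∑ i ∈ Finset.range k, c i * 3 ^ i) = (∑ i ∈ Finset.range k, a i * 3 ^ i)
        ∧ c k = 2 := by
      apply digit_eq (k := k) (by omega) (by omega) (by have := hc k; omega) (by omega)
      rw [← hCsplit, hCA, hAk, ha01]
      ring
    have := hc k
    omega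
  -- now a 0 = 0, so x = 3 * t₁
  have htx1 := trunc a 1
  rw [← hax] at htx1
  simp only [Finset.sum_range_one, pow_zero, mul_one, ha0, Nat.cast_zero, zero_add, pow_one]
    at htx1
  refine ⟨∑' i, (a (i + 1) : ℤ_[3]) * 3 ^ i, htx1, ?_, ?_, ?_⟩
  · exact ⟨fun i => a (i + 1), fun i => ha (i + 1), rfl⟩
  · apply div3 ⟨b, hb, hbx⟩
    rw [htx1]; ring
  · apply div3 ⟨c, hc, hcx⟩
    rw [htx1]; ring

/-- For every k ≥ 1, C(1, N_k, P_k) = {0}, where N_k = 3^k + 1 and P_k = 2·3^k + 1;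
in particular its Hausdorff dimension is 0. -/
theorem C1_Nk_Pk_eq_singleton_zero (k : ℕ) (hk : 1 ≤ k) :
    {x : ℤ_[3] | x ∈ Sigma3 ∧ ((3 ^ k + 1 : ℕ) : ℤ_[3]) * x ∈ Sigma3 ∧
        ((2 * 3 ^ k + 1 : ℕ) : ℤ_[3]) * x ∈ Sigma3} = {0} ∧
    dimH {x : ℤ_[3] | x ∈ Sigma3 ∧ ((3 ^ k + 1 : ℕ) : ℤ_[3]) * x ∈ Sigma3 ∧
        ((2 * 3 ^ k + 1 : ℕ) : ℤ_[3]) * x ∈ Sigma3} = 0 := by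
  have hset : {x : ℤ_[3] | x ∈ Sigma3 ∧ ((3 ^ k + 1 : ℕ) : ℤ_[3]) * x ∈ Sigma3 ∧
      ((2 * 3 ^ k + 1 : ℕ) : ℤ_[3]) * x ∈ Sigma3} = {0} := by
    apply Set.eq_singleton_iff_unique_mem.mpr
    constructor
    · have h0 : (0 : ℤ_[3]) ∈ Sigma3 := ⟨fun _ => 0, fun _ => by norm_num, by simp⟩
      exact ⟨h0, by simpa using h0, by simpa using h0⟩
    · rintro x ⟨hx, hN, hP⟩
      -- iterate the step: 3^n ∣ x for all n
      have key : ∀ n : ℕ, ∃ y : ℤ_[3], x = 3 ^ n * y := by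
        intro n
        induction n with
        | zero => exact ⟨x, by simp⟩
        | succ m ih =>
          -- re-derive membership for the quotient via iterating triple_step
          clear ih
          have main : ∀ m : ℕ, ∀ z : ℤ_[3], z ∈ Sigma3 →
              ((3 ^ k + 1 : ℕ) : ℤ_[3]) * z ∈ Sigma3 →
              ((2 * 3 ^ k + 1 : ℕ) : ℤ_[3]) * z ∈ Sigma3 →
              ∃ y : ℤ_[3], z = 3 ^ m * y := by
            intro m
            induction m with
            | zero => intro z _ _ _; exact ⟨z, by simp⟩
            | succ j ihj =>
              intro z hz hzN hzP
              obtain ⟨y, hy, hy1, hy2, hy3⟩ := triple_step k z hz hzN hzP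
              obtain ⟨w, hw⟩ := ihj y hy1 hy2 hy3
              exact ⟨w, by rw [hy, hw]; ring⟩
          exact main (m + 1) x hx hN hP
      -- conclude x = 0
      have hnorm : ∀ n : ℕ, ‖x‖ ≤ ((3:ℝ)⁻¹) ^ n := by
        intro n
        obtain ⟨y, hy⟩ := key n
        rw [hy, norm_mul, AuxC1.norm_three_pow]
        calc ((3:ℝ)⁻¹) ^ n * ‖y‖ ≤ ((3:ℝ)⁻¹) ^ n * 1 :=
              mul_le_mul_of_nonneg_left (PadicInt.norm_le_one _) (by positivity)
          _ = ((3:ℝ)⁻¹) ^ n := mul_one _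
      have hle : ‖x‖ ≤ 0 := by
        have htend : Filter.Tendsto (fun n : ℕ => ((3:ℝ)⁻¹) ^ n) Filter.atTop (nhds 0) :=
          tendsto_pow_atTop_nhds_zero_of_lt_one (by norm_num) (by norm_num)
        exact ge_of_tendsto' htend hnorm
      have : ‖x‖ = 0 := le_antisymm hle (norm_nonneg _)
      exact norm_eq_zero.mp this
  exact ⟨hset, by rw [hset]; exact dimH_singleton 0⟩

end
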